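/- Let (T, φ) be a phylogenetic tree with n labeled leaves, E its set of non-leaf (internal) edges, and for l ∈ ℝ^E_{≥0} let d_l(i,j) be the sum of l_e over internal edges e on the path from leaf φ(i) to leaf φ(j). Then the linear map ℝ^E → ℝ^{C(n,2)} sending l to (d_l(i,j))_{i<j} is injective. -/

import Mathlib

open scoped Classical

/-- The tree pseudometric on vertices induced by lengths `l` on the edges in `IE`:
`treeDist G IE l u v` is the sum of `l e` over those edges `e ∈ IE` that separate `u`
from `v` in `G` (i.e. lie on the unique path from `u` to `v` when `G` is a tree). -/
noncomputable def treeDist {V : Type*} [Fintype V] (G : SimpleGraph V)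
    (IE : Set (Sym2 V)) (l : Sym2 V → ℝ) (u v : V) : ℝ :=
  ∑ e ∈ IE.toFinite.toFinset,
    if ¬ (G.deleteEdges {e}).Reachable u v then l e else 0

namespace TreeDistAux

open SimpleGraph Walk

variable {V : Type*} {G : SimpleGraph V}

/-- If `s(x,z)` is an edge of a path starting at `x`, then `z` is the second vertex. -/
lemma sndVert {x u z : V} (p : G.Walk x u) (hp : p.IsPath) (hz : s(x, z) ∈ p.edges) :
    p.getVert 1 = z := by
  cases p with
  | nil => simp at hz
  | cons h q =>
    rw [Walk.edges_cons, List.mem_cons] at hz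
    rcases hz with hz | hz
    · rcases Sym2.eq_iff.mp hz with ⟨-, rfl⟩ | ⟨rfl, rfl⟩
      · simp [Walk.getVert_cons_succ]
      · exact absurd rfl h.ne
    · exfalso
      have hx : x ∈ q.support := Walk.fst_mem_support_of_mem_edges q hz
      rw [Walk.cons_isPath_iff] at hp
      exact hp.2 hx

/-- Closing an edge from the endpoint of a path to an interior vertex creates a cycle. -/
lemma no_cycle_edge (hacyc : G.IsAcyclic) {u b c : V} (p : G.Walk u b) (hp : p.IsPath)
    (hadj : G.Adj b c) (hcs : c ∈ p.support) (hne : s(b, c) ∉ p.edges) : False := by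
  have hq : (p.dropUntil c hcs).IsPath := hp.dropUntil hcs
  have hne' : s(b, c) ∉ (p.dropUntil c hcs).edges :=
    fun h => hne (Walk.edges_dropUntil_subset _ _ h)
  exact hacyc _ ((Walk.cons_isCycle_iff _ hadj).mpr ⟨hq, hne'⟩)

/-- The first edge of a path survives in any initial segment `takeUntil w` with `w ≠ x`. -/
lemma firstEdge_takeUntil {x u z w : V} (p : G.Walk x u) (hp : p.IsPath)
    (hz : s(x, z) ∈ p.edges) (hw : w ∈ p.support) (hwx : w ≠ x) :
    s(x, z) ∈ (p.takeUntil w hw).edges := by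
  have hedges : (p.takeUntil w hw).edges ++ (p.dropUntil w hw).edges = p.edges := by
    rw [← Walk.edges_append, p.take_spec hw]
  rw [← hedges, List.mem_append] at hz
  rcases hz with h | h
  · exact h
  · exfalso
    have hx2 : x ∈ (p.dropUntil w hw).support := Walk.fst_mem_support_of_mem_edges _ h
    have hx1 : x ∈ (p.takeUntil w hw).support := Walk.start_mem_support _
    have hsup : p.support = (p.takeUntil w hw).support ++ (p.dropUntil w hw).support.tail := by
      rw [← Walk.support_append, p.take_spec hw]
    have hnd := hp.support_nodup
    rw [hsup] at hnd
    have hdisj := (List.nodup_append'.mp hnd).2.2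
    have hx2t : x ∈ (p.dropUntil w hw).support.tail := by
      have hc := Walk.support_eq_cons (p.dropUntil w hw)
      rw [hc, List.mem_cons] at hx2
      rcases hx2 with h' | h'
      · exact absurd h'.symm hwx
      · exact h'
    exact hdisj hx1 hx2t

/-- Two paths out of `x` which meet at some `w ≠ x` must start with the same edge. -/
lemma branch_eq (hacyc : G.IsAcyclic) {x z₁ z₂ u v w : V}
    (h₁ : G.Adj x z₁) (h₂ : G.Adj x z₂) (q₁ : G.Walk z₁ u) (q₂ : G.Walk z₂ v)
    (hp₁ : (Walk.cons h₁ q₁).IsPath) (hp₂ : (Walk.cons h₂ q₂).IsPath)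
    (hw₁ : w ∈ (Walk.cons h₁ q₁).support) (hw₂ : w ∈ (Walk.cons h₂ q₂).support)
    (hwx : w ≠ x) : z₁ = z₂ := by
  have he₁ : s(x, z₁) ∈ (Walk.cons h₁ q₁).edges := by simp
  have he₂ : s(x, z₂) ∈ (Walk.cons h₂ q₂).edges := by simp
  have t₁ := firstEdge_takeUntil _ hp₁ he₁ hw₁ hwx
  have t₂ := firstEdge_takeUntil _ hp₂ he₂ hw₂ hwx
  have hQ : (⟨_, hp₁.takeUntil hw₁⟩ : G.Path x w) = ⟨_, hp₂.takeUntil hw₂⟩ :=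
    hacyc.path_unique _ _
  have hQ' : (Walk.cons h₁ q₁).takeUntil w hw₁ = (Walk.cons h₂ q₂).takeUntil w hw₂ :=
    congrArg Subtype.val hQ
  have s1 := sndVert _ (hp₁.takeUntil hw₁) t₁
  have s2 := sndVert _ (hp₂.takeUntil hw₂) t₂
  rw [hQ'] at s1
  rw [← s1, s2]

/-- Appending two paths meeting only at the junction gives a path. -/
lemma isPath_append {u v w : V} {p : G.Walk u v} {q : G.Walk v w} (hp : p.IsPath)
    (hq : q.IsPath) (h : ∀ a, a ∈ p.support → a ∈ q.support → a = v) :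
    (p.append q).IsPath := by
  rw [Walk.isPath_def, Walk.support_append, List.nodup_append']
  refine ⟨hp.support_nodup, ?_, ?_⟩
  · have := hq.support_nodup
    rw [Walk.support_eq_cons q] at this
    exact this.of_cons
  · intro a ha ha'
    have hvq : v ∉ q.support.tail := by
      have := hq.support_nodup
      rw [Walk.support_eq_cons q] at this
      exact (List.nodup_cons.mp this).1
    have : a = v := h a ha (List.mem_of_mem_tail ha')
    exact hvq (this ▸ ha')

lemma isPath_concat {u b c : V} {p : G.Walk u b} (hp : p.IsPath) (h : G.Adj b c)
    (hc : c ∉ p.support) : (p.concat h).IsPath := by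
  rw [Walk.concat_eq_append]
  refine isPath_append hp (by simp [Walk.cons_isPath_iff, h.ne]) ?_
  intro a ha ha'
  simp only [Walk.support_cons, Walk.support_nil, List.mem_cons, List.mem_singleton] at ha'
  rcases ha' with rfl | rfl | hfalse
  · rfl
  · exact absurd ha hc
  · simp at hfalse

/-- From any neighbor `z` of `x` one can walk away from `x` to a leaf, in a graph
with no degree-2 vertices. -/
lemma exists_leaf_path [Fintype V] [DecidableRel G.Adj] (hacyc : G.IsAcyclic)
    (hdeg : ∀ v, G.degree v ≠ 2) {x z : V} (hxz : G.Adj x z) :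
    ∃ (b : V) (q : G.Walk z b), q.IsPath ∧ x ∉ q.support ∧ G.degree b = 1 := by
  suffices h : ∀ (k : ℕ) (b : V) (p : G.Walk z b), p.IsPath → x ∉ p.support →
      Fintype.card V ≤ p.length + k →
      ∃ (b' : V) (q : G.Walk z b'), q.IsPath ∧ x ∉ q.support ∧ G.degree b' = 1 by
    refine h (Fintype.card V) z Walk.nil ?_ ?_ ?_
    · exact Walk.IsPath.nil
    · simp [hxz.ne]
    · simp
  intro k
  induction k with
  | zero =>
    intro b p hp _ hcard
    have := hp.length_lt
    omega
  | succ k ih =>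
    intro b p hp hx hcard
    by_cases hb : G.degree b = 1
    · exact ⟨b, p, hp, hx, hb⟩
    have hW : ∃ w₀, G.Adj b w₀ ∧ ∀ c, s(b, c) ∈ p.edges → c = w₀ := by
      by_cases hnil : p.Nil
      · have hzb : z = b := hnil.eq
        refine ⟨x, hzb ▸ hxz.symm, fun c hc => absurd hc ?_⟩
        have hlen : p.edges.length = 0 := by
          rw [Walk.length_edges]
          exact Walk.nil_iff_length_eq.mp hnil
        simp [List.eq_nil_of_length_eq_zero hlen]
      · have hlen : 0 < p.length := Walk.not_nil_iff_lt_length.mp hnil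
        refine ⟨p.reverse.getVert 1, ?_, ?_⟩
        · have := p.reverse.adj_getVert_succ (i := 0) (by rwa [Walk.length_reverse])
          simpa using this
        · intro c hc
          have hc' : s(b, c) ∈ p.reverse.edges := by
            rw [Walk.edges_reverse, List.mem_reverse]; exact hc
          exact (sndVert p.reverse hp.reverse hc').symm
    obtain ⟨w₀, hbw₀, hsnd⟩ := hW
    have hdb : 3 ≤ G.degree b := by
      have h1 : 0 < G.degree b := (G.degree_pos_iff_exists_adj b).mpr ⟨w₀, hbw₀⟩
      have h2 := hdeg b
      omega
    have hcard2 : 1 < ((G.neighborFinset b).erase w₀).card := by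
      rw [Finset.card_erase_of_mem (by rwa [SimpleGraph.mem_neighborFinset])]
      have : G.degree b = (G.neighborFinset b).card := rfl
      omega
    obtain ⟨c₁, hc₁, c₂, hc₂, hcc⟩ := Finset.one_lt_card.mp hcard2
    have hnotsup : ∀ c ∈ (G.neighborFinset b).erase w₀, c ∉ p.support := by
      intro c hc hcs
      have hadj : G.Adj b c := by
        have := Finset.mem_of_mem_erase hc
        rwa [SimpleGraph.mem_neighborFinset] at this
      have hcw : c ≠ w₀ := Finset.ne_of_mem_erase hc
      have hne : s(b, c) ∉ p.edges := fun h => hcw (hsnd c h)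
      exact no_cycle_edge hacyc p hp hadj hcs hne
    have hex : ∃ c ∈ (G.neighborFinset b).erase w₀, c ≠ x := by
      rcases eq_or_ne c₁ x with rfl | h
      · exact ⟨c₂, hc₂, fun h => hcc h.symm⟩
      · exact ⟨c₁, hc₁, h⟩
    obtain ⟨c, hcmem, hcx⟩ := hex
    have hadj : G.Adj b c := by
      have := Finset.mem_of_mem_erase hcmem
      rwa [SimpleGraph.mem_neighborFinset] at this
    have hcs : c ∉ p.support := hnotsup c hcmem
    have hq : (p.concat hadj).IsPath := isPath_concat hp hadj hcs
    have hx' : x ∉ (p.concat hadj).support := by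
      rw [Walk.support_concat]
      simp only [List.mem_append, List.mem_singleton]
      rintro (h | h)
      · exact hx h
      · exact hcx h.symm
    exact ih _ (p.concat hadj) hq hx' (by rw [Walk.length_concat]; omega)

/-- In an acyclic graph, an edge separates `u` from `v` iff it lies on a(the) path. -/
lemma sep_iff (hacyc : G.IsAcyclic) {u v : V} (p : G.Walk u v) (hp : p.IsPath)
    (f : Sym2 V) :
    (¬ (G.deleteEdges {f}).Reachable u v) ↔ f ∈ p.edges := by
  constructor
  · intro h
    by_contra hf
    exact h ⟨p.toDeleteEdges {f} (fun e he hes => hf (Set.mem_singleton_iff.mp hes ▸ he))⟩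
  · intro hf hreach
    obtain ⟨w⟩ := hreach
    have hsub : ∀ e ∈ w.edges, e ∈ G.edgeSet := fun e he => by
      have := w.edges_subset_edgeSet he
      rw [SimpleGraph.edgeSet_deleteEdges] at this
      exact this.1
    have hfw : f ∉ w.edges := fun hfe => by
      have := w.edges_subset_edgeSet hfe
      rw [SimpleGraph.edgeSet_deleteEdges] at this
      exact this.2 rfl
    have hfq : f ∉ ((w.transfer G hsub).toPath : G.Walk u v).edges := fun h => by
      have := Walk.edges_toPath_subset (w.transfer G hsub) h
      rw [Walk.edges_transfer] at this
      exact hfw this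
    have huniq := hacyc.path_unique ⟨p, hp⟩ (w.transfer G hsub).toPath
    apply hfq
    rw [← (congrArg Subtype.val huniq : p = _)]
    exact hf

lemma treeDist_eq [Fintype V] (hacyc : G.IsAcyclic) (IE : Set (Sym2 V)) (L : Sym2 V → ℝ)
    {u v : V} (p : G.Walk u v) (hp : p.IsPath) :
    treeDist G IE L u v = ∑ f ∈ IE.toFinite.toFinset, if f ∈ p.edges then L f else 0 := by
  unfold treeDist
  refine Finset.sum_congr rfl fun f _ => ?_
  simp only [sep_iff hacyc p hp f]

end TreeDistAux

open SimpleGraph Walk TreeDistAux in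
/-- Main combinatorial lemma: if all leaf-to-leaf tree distances vanish, then the
length assigned to each internal edge vanishes. -/
lemma treeDist_main {V : Type*} [Fintype V] {G : SimpleGraph V} [DecidableRel G.Adj]
    (hacyc : G.IsAcyclic) (hdeg : ∀ v, G.degree v ≠ 2) (L : Sym2 V → ℝ)
    (h0 : ∀ u v : V, G.degree u = 1 → G.degree v = 1 →
      treeDist G {e : Sym2 V | e ∈ G.edgeSet ∧ ∀ v ∈ e, G.degree v ≠ 1} L u v = 0) :
    ∀ e ∈ {e : Sym2 V | e ∈ G.edgeSet ∧ ∀ v ∈ e, G.degree v ≠ 1}, L e = 0 := by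
  intro e he
  set IE : Set (Sym2 V) := {e : Sym2 V | e ∈ G.edgeSet ∧ ∀ v ∈ e, G.degree v ≠ 1} with hIE
  induction e using Sym2.ind with
  | _ x y =>
  obtain ⟨hxy', hdeg1⟩ := he
  have hxy : G.Adj x y := hxy'
  have hdx : G.degree x ≠ 1 := hdeg1 x (Sym2.mem_mk_left x y)
  have hdy : G.degree y ≠ 1 := hdeg1 y (Sym2.mem_mk_right x y)
  have deg3 : ∀ v w : V, G.Adj v w → G.degree v ≠ 1 → 3 ≤ G.degree v := by
    intro v w hadj h1
    have h0' : 0 < G.degree v := (G.degree_pos_iff_exists_adj v).mpr ⟨w, hadj⟩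
    have h2 := hdeg v
    omega
  -- pick two neighbors of x other than y
  have hcx : 1 < ((G.neighborFinset x).erase y).card := by
    rw [Finset.card_erase_of_mem (by rwa [SimpleGraph.mem_neighborFinset])]
    have h3 := deg3 x y hxy hdx
    have : G.degree x = (G.neighborFinset x).card := rfl
    omega
  obtain ⟨z₁, hz₁m, z₂, hz₂m, hzz⟩ := Finset.one_lt_card.mp hcx
  have hxz₁ : G.Adj x z₁ := by
    have := Finset.mem_of_mem_erase hz₁m; rwa [SimpleGraph.mem_neighborFinset] at this
  have hxz₂ : G.Adj x z₂ := by
    have := Finset.mem_of_mem_erase hz₂m; rwa [SimpleGraph.mem_neighborFinset] at this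
  have hz₁y : z₁ ≠ y := Finset.ne_of_mem_erase hz₁m
  have hz₂y : z₂ ≠ y := Finset.ne_of_mem_erase hz₂m
  -- pick two neighbors of y other than x
  have hcy : 1 < ((G.neighborFinset y).erase x).card := by
    rw [Finset.card_erase_of_mem (by rw [SimpleGraph.mem_neighborFinset]; exact hxy.symm)]
    have h3 := deg3 y x hxy.symm hdy
    have : G.degree y = (G.neighborFinset y).card := rfl
    omega
  obtain ⟨w₁, hw₁m, w₂, hw₂m, hww⟩ := Finset.one_lt_card.mp hcy
  have hyw₁ : G.Adj y w₁ := by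
    have := Finset.mem_of_mem_erase hw₁m; rwa [SimpleGraph.mem_neighborFinset] at this
  have hyw₂ : G.Adj y w₂ := by
    have := Finset.mem_of_mem_erase hw₂m; rwa [SimpleGraph.mem_neighborFinset] at this
  have hw₁x : w₁ ≠ x := Finset.ne_of_mem_erase hw₁m
  have hw₂x : w₂ ≠ x := Finset.ne_of_mem_erase hw₂m
  -- leaves in the four branches
  obtain ⟨a, qa, hqa, hxqa, hda⟩ := exists_leaf_path hacyc hdeg hxz₁
  obtain ⟨b, qb, hqb, hxqb, hdb⟩ := exists_leaf_path hacyc hdeg hxz₂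
  obtain ⟨c, qc, hqc, hyqc, hdc⟩ := exists_leaf_path hacyc hdeg hyw₁
  obtain ⟨d, qd, hqd, hyqd, hdd⟩ := exists_leaf_path hacyc hdeg hyw₂
  set pa : G.Walk x a := Walk.cons hxz₁ qa with hpa_def
  set pb : G.Walk x b := Walk.cons hxz₂ qb with hpb_def
  set pc : G.Walk y c := Walk.cons hyw₁ qc with hpc_def
  set pd : G.Walk y d := Walk.cons hyw₂ qd with hpd_def
  have hpa : pa.IsPath := (Walk.cons_isPath_iff _ _).mpr ⟨hqa, hxqa⟩
  have hpb : pb.IsPath := (Walk.cons_isPath_iff _ _).mpr ⟨hqb, hxqb⟩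
  have hpc : pc.IsPath := (Walk.cons_isPath_iff _ _).mpr ⟨hqc, hyqc⟩
  have hpd : pd.IsPath := (Walk.cons_isPath_iff _ _).mpr ⟨hqd, hyqd⟩
  have hxynil : (Walk.cons hxy (Walk.nil : G.Walk y y)).IsPath := by
    rw [Walk.cons_isPath_iff]
    constructor
    · exact Walk.IsPath.nil
    · simp [hxy.ne]
  have hyxnil : (Walk.cons hxy.symm (Walk.nil : G.Walk x x)).IsPath := by
    rw [Walk.cons_isPath_iff]
    constructor
    · exact Walk.IsPath.nil
    · simp [hxy.ne']
  -- y is not on pa / pb ; x is not on pc / pd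
  have hy_pa : y ∉ pa.support := by
    intro hy
    exact hz₁y (branch_eq hacyc hxz₁ hxy qa Walk.nil hpa hxynil hy (by simp) hxy.ne')
  have hy_pb : y ∉ pb.support := by
    intro hy
    exact hz₂y (branch_eq hacyc hxz₂ hxy qb Walk.nil hpb hxynil hy (by simp) hxy.ne')
  have hx_pc : x ∉ pc.support := by
    intro hx
    exact hw₁x (branch_eq hacyc hyw₁ hxy.symm qc Walk.nil hpc hyxnil hx (by simp) hxy.ne)
  have hx_pd : x ∉ pd.support := by
    intro hx
    exact hw₂x (branch_eq hacyc hyw₂ hxy.symm qd Walk.nil hpd hyxnil hx (by simp) hxy.ne)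
  have hconsc : (Walk.cons hxy pc).IsPath := (Walk.cons_isPath_iff _ _).mpr ⟨hpc, hx_pc⟩
  have hconsd : (Walk.cons hxy pd).IsPath := (Walk.cons_isPath_iff _ _).mpr ⟨hpd, hx_pd⟩
  -- support meeting properties
  have hab : ∀ w, w ∈ pa.support → w ∈ pb.support → w = x := by
    intro w h1 h2
    by_contra hwx
    exact hzz (branch_eq hacyc hxz₁ hxz₂ qa qb hpa hpb h1 h2 hwx)
  have hcd : ∀ w, w ∈ pc.support → w ∈ pd.support → w = y := by
    intro w h1 h2
    by_contra hwy
    exact hww (branch_eq hacyc hyw₁ hyw₂ qc qd hpc hpd h1 h2 hwy)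
  have hac : ∀ w, w ∈ pa.support → w ∈ pc.support → False := by
    intro w h1 h2
    have hwx : w ≠ x := fun h => hx_pc (h ▸ h2)
    exact hz₁y (branch_eq hacyc hxz₁ hxy qa pc hpa hconsc h1
      (by rw [Walk.support_cons]; exact List.mem_cons_of_mem _ h2) hwx)
  have had : ∀ w, w ∈ pa.support → w ∈ pd.support → False := by
    intro w h1 h2
    have hwx : w ≠ x := fun h => hx_pd (h ▸ h2)
    exact hz₁y (branch_eq hacyc hxz₁ hxy qa pd hpa hconsd h1
      (by rw [Walk.support_cons]; exact List.mem_cons_of_mem _ h2) hwx)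
  have hbc : ∀ w, w ∈ pb.support → w ∈ pc.support → False := by
    intro w h1 h2
    have hwx : w ≠ x := fun h => hx_pc (h ▸ h2)
    exact hz₂y (branch_eq hacyc hxz₂ hxy qb pc hpb hconsc h1
      (by rw [Walk.support_cons]; exact List.mem_cons_of_mem _ h2) hwx)
  have hbd : ∀ w, w ∈ pb.support → w ∈ pd.support → False := by
    intro w h1 h2
    have hwx : w ≠ x := fun h => hx_pd (h ▸ h2)
    exact hz₂y (branch_eq hacyc hxz₂ hxy qb pd hpb hconsd h1
      (by rw [Walk.support_cons]; exact List.mem_cons_of_mem _ h2) hwx)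
  -- edge disjointness
  have edisjx : ∀ {v1 v2 r : V} (p : G.Walk r v1) (q : G.Walk r v2),
      (∀ w, w ∈ p.support → w ∈ q.support → w = r) →
      ∀ f, f ∈ p.edges → f ∉ q.edges := by
    intro v1 v2 r p q hmeet f hfp hfq
    revert hfp hfq
    induction f using Sym2.ind with
    | _ s t =>
    intro hfp hfq
    have hr : s = r := hmeet s (Walk.fst_mem_support_of_mem_edges p hfp)
      (Walk.fst_mem_support_of_mem_edges q hfq)
    have ht : t = r := hmeet t (Walk.snd_mem_support_of_mem_edges p hfp)
      (Walk.snd_mem_support_of_mem_edges q hfq)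
    have hadj : G.Adj s t := p.edges_subset_edgeSet hfp
    exact hadj.ne (hr.trans ht.symm)
  have edisj0 : ∀ {u1 v1 u2 v2 : V} (p : G.Walk u1 v1) (q : G.Walk u2 v2),
      (∀ w, w ∈ p.support → w ∈ q.support → False) →
      ∀ f, f ∈ p.edges → f ∉ q.edges := by
    intro u1 v1 u2 v2 p q hmeet f hfp hfq
    revert hfp hfq
    induction f using Sym2.ind with
    | _ s t =>
    intro hfp hfq
    exact hmeet s (Walk.fst_mem_support_of_mem_edges p hfp)
      (Walk.fst_mem_support_of_mem_edges q hfq)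
  have hE_ab : ∀ f, f ∈ pa.edges → f ∉ pb.edges := edisjx pa pb hab
  have hE_cd : ∀ f, f ∈ pc.edges → f ∉ pd.edges := edisjx pc pd hcd
  have hE_ac : ∀ f, f ∈ pa.edges → f ∉ pc.edges := edisj0 pa pc hac
  have hE_ad : ∀ f, f ∈ pa.edges → f ∉ pd.edges := edisj0 pa pd had
  have hE_bc : ∀ f, f ∈ pb.edges → f ∉ pc.edges := edisj0 pb pc hbc
  have hE_bd : ∀ f, f ∈ pb.edges → f ∉ pd.edges := edisj0 pb pd hbd
  have hE0_a : s(x, y) ∉ pa.edges := fun h => hy_pa (Walk.snd_mem_support_of_mem_edges pa h)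
  have hE0_b : s(x, y) ∉ pb.edges := fun h => hy_pb (Walk.snd_mem_support_of_mem_edges pb h)
  have hE0_c : s(x, y) ∉ pc.edges := fun h => hx_pc (Walk.fst_mem_support_of_mem_edges pc h)
  have hE0_d : s(x, y) ∉ pd.edges := fun h => hx_pd (Walk.fst_mem_support_of_mem_edges pd h)
  -- the four connecting paths
  set Pab : G.Walk a b := pa.reverse.append pb with hPab_def
  set Pac : G.Walk a c := pa.reverse.append (Walk.cons hxy pc) with hPac_def
  set Pbd : G.Walk b d := pb.reverse.append (Walk.cons hxy pd) with hPbd_def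
  set Pcd : G.Walk c d := pc.reverse.append pd with hPcd_def
  have hrevsup : ∀ {r v1 : V} (p : G.Walk r v1) (w : V),
      w ∈ p.reverse.support ↔ w ∈ p.support := by
    intro r v1 p w
    rw [Walk.support_reverse, List.mem_reverse]
  have hPab : Pab.IsPath := isPath_append hpa.reverse hpb
    (fun w h1 h2 => hab w ((hrevsup pa w).mp h1) h2)
  have hPac : Pac.IsPath := by
    refine isPath_append hpa.reverse hconsc ?_
    intro w h1 h2
    rw [Walk.support_cons, List.mem_cons] at h2
    rcases h2 with rfl | h2
    · rfl
    · exact absurd ((hrevsup pa w).mp h1) (fun h => hac w h h2)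
  have hPbd : Pbd.IsPath := by
    refine isPath_append hpb.reverse hconsd ?_
    intro w h1 h2
    rw [Walk.support_cons, List.mem_cons] at h2
    rcases h2 with rfl | h2
    · rfl
    · exact absurd ((hrevsup pb w).mp h1) (fun h => hbd w h h2)
  have hPcd : Pcd.IsPath := isPath_append hpc.reverse hpd
    (fun w h1 h2 => hcd w ((hrevsup pc w).mp h1) h2)
  -- edge membership characterizations
  have mem_Pab : ∀ f, f ∈ Pab.edges ↔ (f ∈ pa.edges ∨ f ∈ pb.edges) := by
    intro f
    rw [hPab_def]
    simp only [Walk.edges_append, List.mem_append, Walk.edges_reverse, List.mem_reverse,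
      Walk.edges_cons, List.mem_cons]
  have mem_Pac : ∀ f, f ∈ Pac.edges ↔ (f ∈ pa.edges ∨ f = s(x, y) ∨ f ∈ pc.edges) := by
    intro f
    rw [hPac_def]
    simp only [Walk.edges_append, List.mem_append, Walk.edges_reverse, List.mem_reverse,
      Walk.edges_cons, List.mem_cons]
  have mem_Pbd : ∀ f, f ∈ Pbd.edges ↔ (f ∈ pb.edges ∨ f = s(x, y) ∨ f ∈ pd.edges) := by
    intro f
    rw [hPbd_def]
    simp only [Walk.edges_append, List.mem_append, Walk.edges_reverse, List.mem_reverse,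
      Walk.edges_cons, List.mem_cons]
  have mem_Pcd : ∀ f, f ∈ Pcd.edges ↔ (f ∈ pc.edges ∨ f ∈ pd.edges) := by
    intro f
    rw [hPcd_def]
    simp only [Walk.edges_append, List.mem_append, Walk.edges_reverse, List.mem_reverse,
      Walk.edges_cons, List.mem_cons]
  -- the four distances vanish
  have Dab : ∑ f ∈ IE.toFinite.toFinset, (if f ∈ Pab.edges then L f else 0) = 0 := by
    rw [← treeDist_eq hacyc IE L Pab hPab]
    exact h0 a b hda hdb
  have Dac : ∑ f ∈ IE.toFinite.toFinset, (if f ∈ Pac.edges then L f else 0) = 0 := by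
    rw [← treeDist_eq hacyc IE L Pac hPac]
    exact h0 a c hda hdc
  have Dbd : ∑ f ∈ IE.toFinite.toFinset, (if f ∈ Pbd.edges then L f else 0) = 0 := by
    rw [← treeDist_eq hacyc IE L Pbd hPbd]
    exact h0 b d hdb hdd
  have Dcd : ∑ f ∈ IE.toFinite.toFinset, (if f ∈ Pcd.edges then L f else 0) = 0 := by
    rw [← treeDist_eq hacyc IE L Pcd hPcd]
    exact h0 c d hdc hdd
  -- key pointwise identity
  have key : ∀ f ∈ IE.toFinite.toFinset,
      ((if f ∈ Pac.edges then L f else 0) + (if f ∈ Pbd.edges then L f else 0))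
        - ((if f ∈ Pab.edges then L f else 0) + (if f ∈ Pcd.edges then L f else 0))
      = (if f = s(x, y) then 2 * L f else 0) := by
    intro f _
    by_cases hf0 : f = s(x, y)
    · have h1 : f ∈ Pac.edges := (mem_Pac f).mpr (Or.inr (Or.inl hf0))
      have h2 : f ∈ Pbd.edges := (mem_Pbd f).mpr (Or.inr (Or.inl hf0))
      have h3 : f ∉ Pab.edges := by
        intro h
        rcases (mem_Pab f).mp h with h | h
        · exact hE0_a (hf0 ▸ h)
        · exact hE0_b (hf0 ▸ h)
      have h4 : f ∉ Pcd.edges := by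
        intro h
        rcases (mem_Pcd f).mp h with h | h
        · exact hE0_c (hf0 ▸ h)
        · exact hE0_d (hf0 ▸ h)
      rw [if_pos h1, if_pos h2, if_neg h3, if_neg h4, if_pos hf0]
      ring
    · by_cases hA : f ∈ pa.edges
      · have h1 : f ∈ Pac.edges := (mem_Pac f).mpr (Or.inl hA)
        have h3 : f ∈ Pab.edges := (mem_Pab f).mpr (Or.inl hA)
        have h2 : f ∉ Pbd.edges := by
          intro h
          rcases (mem_Pbd f).mp h with h | h | h
          · exact hE_ab f hA h
          · exact hf0 h
          · exact hE_ad f hA h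
        have h4 : f ∉ Pcd.edges := by
          intro h
          rcases (mem_Pcd f).mp h with h | h
          · exact hE_ac f hA h
          · exact hE_ad f hA h
        rw [if_pos h1, if_neg h2, if_pos h3, if_neg h4, if_neg hf0]
        ring
      · by_cases hB : f ∈ pb.edges
        · have h2 : f ∈ Pbd.edges := (mem_Pbd f).mpr (Or.inl hB)
          have h3 : f ∈ Pab.edges := (mem_Pab f).mpr (Or.inr hB)
          have h1 : f ∉ Pac.edges := by
            intro h
            rcases (mem_Pac f).mp h with h | h | h
            · exact hA h
            · exact hf0 h
            · exact hE_bc f hB h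
          have h4 : f ∉ Pcd.edges := by
            intro h
            rcases (mem_Pcd f).mp h with h | h
            · exact hE_bc f hB h
            · exact hE_bd f hB h
          rw [if_neg h1, if_pos h2, if_pos h3, if_neg h4, if_neg hf0]
          ring
        · by_cases hC : f ∈ pc.edges
          · have h1 : f ∈ Pac.edges := (mem_Pac f).mpr (Or.inr (Or.inr hC))
            have h4 : f ∈ Pcd.edges := (mem_Pcd f).mpr (Or.inl hC)
            have h2 : f ∉ Pbd.edges := by
              intro h
              rcases (mem_Pbd f).mp h with h | h | h
              · exact hB h
              · exact hf0 h
              · exact hE_cd f hC h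
            have h3 : f ∉ Pab.edges := by
              intro h
              rcases (mem_Pab f).mp h with h | h
              · exact hA h
              · exact hB h
            rw [if_pos h1, if_neg h2, if_neg h3, if_pos h4, if_neg hf0]
            ring
          · by_cases hD : f ∈ pd.edges
            · have h2 : f ∈ Pbd.edges := (mem_Pbd f).mpr (Or.inr (Or.inr hD))
              have h4 : f ∈ Pcd.edges := (mem_Pcd f).mpr (Or.inr hD)
              have h1 : f ∉ Pac.edges := by
                intro h
                rcases (mem_Pac f).mp h with h | h | h
                · exact hA h
                · exact hf0 h
                · exact hC h
              have h3 : f ∉ Pab.edges := by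
                intro h
                rcases (mem_Pab f).mp h with h | h
                · exact hA h
                · exact hB h
              rw [if_neg h1, if_pos h2, if_neg h3, if_pos h4, if_neg hf0]
              ring
            · have h1 : f ∉ Pac.edges := by
                intro h
                rcases (mem_Pac f).mp h with h | h | h
                · exact hA h
                · exact hf0 h
                · exact hC h
              have h2 : f ∉ Pbd.edges := by
                intro h
                rcases (mem_Pbd f).mp h with h | h | h
                · exact hB h
                · exact hf0 h
                · exact hD h
              have h3 : f ∉ Pab.edges := by
                intro h
                rcases (mem_Pab f).mp h with h | h
                · exact hA h
                · exact hB h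
              have h4 : f ∉ Pcd.edges := by
                intro h
                rcases (mem_Pcd f).mp h with h | h
                · exact hC h
                · exact hD h
              rw [if_neg h1, if_neg h2, if_neg h3, if_neg h4, if_neg hf0]
              ring
  -- sum it up
  have hsum : (0 : ℝ) = ∑ f ∈ IE.toFinite.toFinset, (if f = s(x, y) then 2 * L f else 0) := by
    rw [← Finset.sum_congr rfl key, Finset.sum_sub_distrib, Finset.sum_add_distrib,
      Finset.sum_add_distrib, Dab, Dac, Dbd, Dcd]
    norm_num
  have he0mem : s(x, y) ∈ IE.toFinite.toFinset :=
    (Set.Finite.mem_toFinset _).mpr ⟨hxy', hdeg1⟩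
  rw [Finset.sum_ite_eq' _ _ (fun f => 2 * L f), if_pos he0mem] at hsum
  linarith

open SimpleGraph Walk TreeDistAux in
lemma treeDist_zero_self {V : Type*} [Fintype V] (G : SimpleGraph V) (IE : Set (Sym2 V))
    (L : Sym2 V → ℝ) (u : V) : treeDist G IE L u u = 0 := by
  unfold treeDist
  refine Finset.sum_eq_zero fun f _ => ?_
  rw [if_neg (not_not_intro (SimpleGraph.Reachable.refl u))]

open SimpleGraph Walk TreeDistAux in
lemma treeDist_comm {V : Type*} [Fintype V] (G : SimpleGraph V) (IE : Set (Sym2 V))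
    (L : Sym2 V → ℝ) (u v : V) : treeDist G IE L u v = treeDist G IE L v u := by
  unfold treeDist
  refine Finset.sum_congr rfl fun f _ => ?_
  simp only [SimpleGraph.reachable_comm]

/-- For a phylogenetic tree `(T, φ)` with `n ≥ 3` labeled leaves (a tree with
no degree-2 vertices, leaves bijectively labeled by `Fin n`), the linear map
`ℝ^E → ℝ^{C(n,2)}` sending a vector `l` of internal-edge lengths to the induced leaf
distances `(d_l(i,j))_{i<j}` is injective. -/
theorem tree_distance_map_injective {V : Type*} [Fintype V] (n : ℕ) (hn : 3 ≤ n)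
    (G : SimpleGraph V) [DecidableRel G.Adj]
    (hconn : G.Connected) (hacyc : G.IsAcyclic) (hdeg : ∀ v, G.degree v ≠ 2)
    (φ : Fin n ≃ {v : V // G.degree v = 1}) :
    Function.Injective
      (fun (l : {e : Sym2 V // e ∈ G.edgeSet ∧ ∀ v ∈ e, G.degree v ≠ 1} → ℝ)
          (p : {p : Fin n × Fin n // p.1 < p.2}) =>
        treeDist G {e : Sym2 V | e ∈ G.edgeSet ∧ ∀ v ∈ e, G.degree v ≠ 1}
          (fun e => if h : e ∈ G.edgeSet ∧ ∀ v ∈ e, G.degree v ≠ 1 then l ⟨e, h⟩ else 0)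
          (φ p.1.1) (φ p.1.2)) := by
  intro l₁ l₂ h
  set IE : Set (Sym2 V) := {e : Sym2 V | e ∈ G.edgeSet ∧ ∀ v ∈ e, G.degree v ≠ 1} with hIE
  set L₁ : Sym2 V → ℝ :=
    fun e => if h : e ∈ G.edgeSet ∧ ∀ v ∈ e, G.degree v ≠ 1 then l₁ ⟨e, h⟩ else 0 with hL₁
  set L₂ : Sym2 V → ℝ :=
    fun e => if h : e ∈ G.edgeSet ∧ ∀ v ∈ e, G.degree v ≠ 1 then l₂ ⟨e, h⟩ else 0 with hL₂
  set L : Sym2 V → ℝ := fun e => L₁ e - L₂ e with hL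
  have hsplit : ∀ u v : V, treeDist G IE L u v = treeDist G IE L₁ u v - treeDist G IE L₂ u v := by
    intro u v
    unfold treeDist
    rw [← Finset.sum_sub_distrib]
    refine Finset.sum_congr rfl fun f _ => ?_
    by_cases hr : ¬ (G.deleteEdges {f}).Reachable u v
    · rw [if_pos hr, if_pos hr, if_pos hr]
    · rw [if_neg hr, if_neg hr, if_neg hr]
      ring
  have hpair : ∀ i j : Fin n, i < j → treeDist G IE L₁ ((φ i : V)) ((φ j : V))
      = treeDist G IE L₂ ((φ i : V)) ((φ j : V)) := by
    intro i j hij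
    exact congrFun h (⟨(i, j), hij⟩ : {p : Fin n × Fin n // p.1 < p.2})
  have h0 : ∀ u v : V, G.degree u = 1 → G.degree v = 1 → treeDist G IE L u v = 0 := by
    intro u v hu hv
    have hiu : ((φ (φ.symm ⟨u, hu⟩) : {v : V // G.degree v = 1}) : V) = u := by
      rw [Equiv.apply_symm_apply]
    have hiv : ((φ (φ.symm ⟨v, hv⟩) : {v : V // G.degree v = 1}) : V) = v := by
      rw [Equiv.apply_symm_apply]
    set i := φ.symm ⟨u, hu⟩
    set j := φ.symm ⟨v, hv⟩
    rcases lt_trichotomy i j with hij | hij | hij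
    · rw [hsplit]
      have := hpair i j hij
      rw [hiu, hiv] at this
      rw [this]
      ring
    · have huv : u = v := by
        rw [← hiu, ← hiv, hij]
      rw [huv]
      exact treeDist_zero_self G IE L v
    · rw [hsplit]
      have := hpair j i hij
      rw [hiu, hiv] at this
      rw [treeDist_comm G IE L₁ u v, treeDist_comm G IE L₂ u v, this]
      ring
  have hzero := treeDist_main hacyc hdeg L h0
  funext e
  have he := hzero e.1 e.2
  rw [hL] at he
  simp only [hL₁, hL₂, dif_pos e.2] at he
  have : l₁ ⟨e.1, e.2⟩ = l₂ ⟨e.1, e.2⟩ := by linarith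
  simpa using this
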